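/- Let G be a finitely generated nilpotent group and T a continuous action of G on a compact metric space X. If there exists g ∈ G such that the homeomorphism T_g is expansive and has the pseudo-orbit tracing property (as a Z-action), then the G-action T has the pseudo-orbit tracing property. -/

import Mathlib

/-- A continuous action of a group `G` on a topological space `X`. -/
def IsContAction {G X : Type*} [Group G] [TopologicalSpace X] (T : G → X → X) : Prop :=
  (∀ g, Continuous (T g)) ∧ (∀ x, T 1 x = x) ∧ ∀ g h x, T (g * h) x = T g (T h x)

/-- `{x_g}` is a `δ` pseudo-orbit of `T` with respect to the generating set `A`. -/
def IsPseudoOrbit {G X : Type*} [Group G] [MetricSpace X] (T : G → X → X) (A : Set G)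
    (δ : ℝ) (x : G → X) : Prop :=
  ∀ a ∈ A, ∀ g : G, dist (T a (x g)) (x (a * g)) < δ

/-- The point `y` `ε`-traces the pseudo-orbit `{x_g}`. -/
def Traces {G X : Type*} [Group G] [MetricSpace X] (T : G → X → X) (ε : ℝ)
    (x : G → X) (y : X) : Prop :=
  ∀ g : G, dist (T g y) (x g) < ε

/-- `T` has the pseudo-orbit tracing property with respect to the generating set `A`. -/
def POTPWrt {G X : Type*} [Group G] [MetricSpace X] (T : G → X → X) (A : Set G) : Prop :=
  ∀ ε > (0 : ℝ), ∃ δ > (0 : ℝ), ∀ x : G → X, IsPseudoOrbit T A δ x → ∃ y : X, Traces T ε x y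

/-- `T` is `A`-topologically stable. -/
def TopStableWrt {G X : Type*} [Group G] [MetricSpace X] (T : G → X → X) (A : Set G) : Prop :=
  ∀ ε > (0 : ℝ), ∃ δ > (0 : ℝ), ∀ S : G → X → X, IsContAction S →
    (∀ a ∈ A, ∀ x : X, dist (T a x) (S a x) < δ) →
    ∃ f : X → X, Continuous f ∧ (∀ g x, T g (f x) = f (S g x)) ∧ ∀ x, dist (f x) x ≤ ε

/-- `T` is expansive with expansive constant `c`. -/
def ExpansiveWith {G X : Type*} [Group G] [MetricSpace X] (T : G → X → X) (c : ℝ) : Prop :=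
  0 < c ∧ ∀ x y : X, x ≠ y → ∃ g : G, dist (T g x) (T g y) > c

/-- The homeomorphism `T_g` is expansive (as a `ℤ`-action) with expansive constant `c`. -/
def ZExpansiveWith {G X : Type*} [Group G] [MetricSpace X] (T : G → X → X) (g : G)
    (c : ℝ) : Prop :=
  0 < c ∧ ∀ x y : X, x ≠ y → ∃ n : ℤ, dist (T (g ^ n) x) (T (g ^ n) y) > c

/-- The homeomorphism `T_g` has the classical pseudo-orbit tracing property (as a
`ℤ`-action). -/
def ZPOTP {G X : Type*} [Group G] [MetricSpace X] (T : G → X → X) (g : G) : Prop :=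
  ∀ ε > (0 : ℝ), ∃ δ > (0 : ℝ), ∀ x : ℤ → X, (∀ n : ℤ, dist (T g (x n)) (x (n + 1)) < δ) →
    ∃ y : X, ∀ n : ℤ, dist (T (g ^ n) y) (x n) < ε

/-! ### Auxiliary machinery -/

section PotpAux

open Subgroup commutatorElement

variable {G X : Type*} [Group G] [MetricSpace X]

/-- Uniqueness of `c`-tracing points, from expansiveness of `T_g`. -/
theorem unique_of_zexp {T : G → X → X} {g : G} {c : ℝ}
    (hexp : ZExpansiveWith T g c) {u v : X}
    (h : ∀ n : ℤ, dist (T (g ^ n) u) (T (g ^ n) v) ≤ c) : u = v := by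
  by_contra hne
  obtain ⟨n, hn⟩ := hexp.2 u v hne
  exact absurd (h n) (not_le.mpr hn)

/-- Uniform continuity, uniformly over a finite family of maps. -/
theorem finset_unifcont [CompactSpace X] {T : G → X → X} (hT : ∀ f, Continuous (T f))
    (B : Finset G) {θ : ℝ} (hθ : 0 < θ) :
    ∃ ρ > (0 : ℝ), ∀ b ∈ B, ∀ u v : X, dist u v < ρ → dist (T b u) (T b v) < θ := by
  classical
  induction B using Finset.induction_on with
  | empty => exact ⟨1, one_pos, by simp⟩
  | @insert a B ha ih =>
    obtain ⟨ρ1, hρ1, h1⟩ := ih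
    have huc := CompactSpace.uniformContinuous_of_continuous (hT a)
    rw [Metric.uniformContinuous_iff] at huc
    obtain ⟨ρ2, hρ2, h2⟩ := huc θ hθ
    refine ⟨min ρ1 ρ2, lt_min hρ1 hρ2, ?_⟩
    intro b hb u v huv
    rcases Finset.mem_insert.mp hb with rfl | hb
    · exact h2 (lt_of_lt_of_le huv (min_le_right _ _))
    · exact h1 b hb u v (lt_of_lt_of_le huv (min_le_left _ _))

/-- Transfer of the pseudo-orbit property from generators to a single group element. -/
theorem transfer_single [CompactSpace X] {A : Finset G}
    (hAgen : Subgroup.closure (A : Set G) = ⊤) {T : G → X → X} (hT : IsContAction T)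
    (f : G) : ∀ θ > (0 : ℝ), ∃ δ > (0 : ℝ), ∀ ξ : G → X, IsPseudoOrbit T (A : Set G) δ ξ →
      ∀ k : G, dist (T f (ξ k)) (ξ (f * k)) < θ := by
  have hf : f ∈ Subgroup.closure (A : Set G) := hAgen ▸ Subgroup.mem_top f
  induction hf using Subgroup.closure_induction with
  | mem a ha =>
    intro θ hθ
    exact ⟨θ, hθ, fun ξ hξ k => hξ a ha k⟩
  | one =>
    intro θ hθ
    refine ⟨1, one_pos, fun ξ hξ k => ?_⟩
    rw [hT.2.1, one_mul, dist_self]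
    exact hθ
  | mul x y hx hy ihx ihy =>
    intro θ hθ
    have hucx := CompactSpace.uniformContinuous_of_continuous (hT.1 x)
    rw [Metric.uniformContinuous_iff] at hucx
    obtain ⟨η, hη, hx2⟩ := hucx (θ / 2) (by linarith)
    obtain ⟨δ1, hδ1, h1⟩ := ihx (θ / 2) (by linarith)
    obtain ⟨δ2, hδ2, h2⟩ := ihy η hη
    refine ⟨min δ1 δ2, lt_min hδ1 hδ2, fun ξ hξ k => ?_⟩
    have hξ1 : IsPseudoOrbit T (A : Set G) δ1 ξ :=
      fun a ha k' => (hξ a ha k').trans_le (min_le_left _ _)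
    have hξ2 : IsPseudoOrbit T (A : Set G) δ2 ξ :=
      fun a ha k' => (hξ a ha k').trans_le (min_le_right _ _)
    have e1 : T (x * y) (ξ k) = T x (T y (ξ k)) := hT.2.2 x y (ξ k)
    calc dist (T (x * y) (ξ k)) (ξ (x * y * k))
        ≤ dist (T x (T y (ξ k))) (T x (ξ (y * k))) + dist (T x (ξ (y * k))) (ξ (x * (y * k))) := by
          rw [e1, mul_assoc]; exact dist_triangle _ _ _
      _ < θ / 2 + θ / 2 := add_lt_add (hx2 (h2 ξ hξ2 k)) (h1 ξ hξ1 (y * k))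
      _ = θ := by ring
  | inv x hx ihx =>
    intro θ hθ
    have huc := CompactSpace.uniformContinuous_of_continuous (hT.1 x⁻¹)
    rw [Metric.uniformContinuous_iff] at huc
    obtain ⟨η, hη, h2⟩ := huc θ hθ
    obtain ⟨δ, hδ, h1⟩ := ihx η hη
    refine ⟨δ, hδ, fun ξ hξ k => ?_⟩
    have key := h2 (h1 ξ hξ (x⁻¹ * k))
    have e1 : T x⁻¹ (T x (ξ (x⁻¹ * k))) = ξ (x⁻¹ * k) := by
      rw [← hT.2.2, inv_mul_cancel, hT.2.1]
    have e2 : x * (x⁻¹ * k) = k := by group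
    rw [e1, e2] at key
    rw [dist_comm]
    exact key

/-- Transfer of the pseudo-orbit property from generators to a finite set of elements. -/
theorem transfer_finset [CompactSpace X] {A : Finset G}
    (hAgen : Subgroup.closure (A : Set G) = ⊤) {T : G → X → X} (hT : IsContAction T)
    (F : Finset G) {θ : ℝ} (hθ : 0 < θ) :
    ∃ δ > (0 : ℝ), ∀ ξ : G → X, IsPseudoOrbit T (A : Set G) δ ξ →
      ∀ f ∈ F, ∀ k : G, dist (T f (ξ k)) (ξ (f * k)) < θ := by
  classical
  induction F using Finset.induction_on with
  | empty => exact ⟨1, one_pos, by simp⟩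
  | @insert f F hf ih =>
    obtain ⟨δ1, hδ1, h1⟩ := ih
    obtain ⟨δ2, hδ2, h2⟩ := transfer_single hAgen hT f θ hθ
    refine ⟨min δ1 δ2, lt_min hδ1 hδ2, fun ξ hξ b hb k => ?_⟩
    rcases Finset.mem_insert.mp hb with rfl | hb
    · exact h2 ξ (fun a ha k' => (hξ a ha k').trans_le (min_le_right _ _)) k
    · exact h1 ξ (fun a ha k' => (hξ a ha k').trans_le (min_le_left _ _)) b hb k

/-- Iterated commutators of weight `j+1` in the generators. -/
def Wset (A : Finset G) : ℕ → Set G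
  | 0 => (A : Set G)
  | j + 1 => (fun p : G × G => ⁅p.1, p.2⁆) '' ((Wset A j) ×ˢ (A : Set G))

theorem Wset_finite (A : Finset G) : ∀ j, (Wset A j).Finite := by
  intro j
  induction j with
  | zero => exact A.finite_toSet
  | succ j ih => exact (ih.prod A.finite_toSet).image _

theorem Wset_subset_lcs (A : Finset G) :
    ∀ j, ∀ w ∈ Wset A j, w ∈ Subgroup.lowerCentralSeries (⊤ : Subgroup G) j := by
  intro j
  induction j with
  | zero => exact fun w _ => Subgroup.mem_top w
  | succ j ih =>
    rintro w ⟨⟨p, l⟩, ⟨hp, hl⟩, rfl⟩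
    have : Subgroup.lowerCentralSeries (⊤ : Subgroup G) (j + 1) = ⁅Subgroup.lowerCentralSeries (⊤ : Subgroup G) j, ⊤⁆ := rfl
    rw [this]
    exact Subgroup.commutator_mem_commutator (ih p hp) (Subgroup.mem_top l)

/-- The subgroup generated by all iterated commutators of weight at least `j+1`. -/
def Nsub (A : Finset G) (j : ℕ) : Subgroup G :=
  ⨆ i : ℕ, Subgroup.closure (Wset A (j + i))

theorem mem_Nsub_of_mem_Wset {A : Finset G} {j i : ℕ} {w : G} (hw : w ∈ Wset A (j + i)) :
    w ∈ Nsub A j :=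
  (le_iSup (fun i => Subgroup.closure (Wset A (j + i))) i) (Subgroup.subset_closure hw)

theorem Nsub_succ_le (A : Finset G) (j : ℕ) : Nsub A (j + 1) ≤ Nsub A j := by
  refine iSup_le fun i => ?_
  have e : j + 1 + i = j + (i + 1) := by omega
  rw [e]
  exact le_iSup (fun i => Subgroup.closure (Wset A (j + i))) (i + 1)

theorem Nsub_le_sup (A : Finset G) (j : ℕ) :
    Nsub A j ≤ Subgroup.closure (Wset A j) ⊔ Nsub A (j + 1) := by
  refine iSup_le fun i => ?_
  cases i with
  | zero => simp only [Nat.add_zero]; exact le_sup_left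
  | succ i =>
    refine le_sup_of_le_right ?_
    have e : j + (i + 1) = (j + 1) + i := by omega
    rw [e]
    exact le_iSup (fun i => Subgroup.closure (Wset A ((j + 1) + i))) i

theorem Nsub_bot {A : Finset G} {k : ℕ} (hk : Subgroup.lowerCentralSeries (⊤ : Subgroup G) k = ⊥) :
    Nsub A k = ⊥ := by
  refine le_bot_iff.mp (iSup_le fun i => ?_)
  calc Subgroup.closure (Wset A (k + i))
      ≤ Subgroup.lowerCentralSeries (⊤ : Subgroup G) (k + i) :=
        (Subgroup.closure_le _).mpr fun w hw => Wset_subset_lcs A _ w hw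
    _ ≤ Subgroup.lowerCentralSeries (⊤ : Subgroup G) k := Subgroup.lowerCentralSeries_antitone _ (Nat.le_add_right k i)
    _ = ⊥ := hk

/-- Normality of the `Nsub` subgroups together with the key commutator inclusion. -/
theorem normal_CL {A : Finset G} (hAgen : Subgroup.closure (A : Set G) = ⊤) {k : ℕ}
    (hk : Subgroup.lowerCentralSeries (⊤ : Subgroup G) k = ⊥) :
    ∀ d : ℕ, (Nsub A (k - d)).Normal ∧
      ∀ x s : G, s ∈ Nsub A (k - d) → ⁅x, s⁆ ∈ Nsub A (k - d + 1) := by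
  intro d
  induction d with
  | zero =>
    rw [Nat.sub_zero, Nsub_bot hk]
    constructor
    · exact ⟨fun n hn t => by rw [Subgroup.mem_bot] at hn ⊢; simp [hn]⟩
    · intro x s hs
      rw [Subgroup.mem_bot] at hs
      rw [hs, commutatorElement_one_right]
      exact one_mem _
  | succ d ih =>
    by_cases hkd : k ≤ d
    · have e : k - (d + 1) = k - d := by omega
      rw [e]
      exact ih
    · have e : k - d = (k - (d + 1)) + 1 := by omega
      have ihnorm := ih.1
      rw [e] at ihnorm
      generalize k - (d + 1) = j at ihnorm ⊢
      -- base of the commutator computation: single iterated commutator on the right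
      have hbase : ∀ (x w : G) (i : ℕ), w ∈ Wset A (j + i) → ⁅x, w⁆ ∈ Nsub A (j + 1) := by
        intro x w i hw
        have hx : x ∈ Subgroup.closure (A : Set G) := hAgen ▸ Subgroup.mem_top x
        induction hx using Subgroup.closure_induction with
        | mem l hl =>
          have hmem : ⁅w, l⁆ ∈ Wset A ((j + 1) + i) := by
            have e2 : (j + 1) + i = (j + i) + 1 := by omega
            rw [e2]
            exact ⟨(w, l), ⟨hw, hl⟩, rfl⟩
          rw [← commutatorElement_inv]
          exact inv_mem (mem_Nsub_of_mem_Wset hmem)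
        | one =>
          rw [commutatorElement_one_left]
          exact one_mem _
        | mul x y hx hy ihx ihy =>
          have e2 : ⁅x * y, w⁆ = x * ⁅y, w⁆ * x⁻¹ * ⁅x, w⁆ := by
            simp only [commutatorElement_def]; group
          rw [e2]
          exact mul_mem (ihnorm.conj_mem _ ihy x) ihx
        | inv x hx ihx =>
          have e2 : ⁅x⁻¹, w⁆ = x⁻¹ * ⁅x, w⁆⁻¹ * x := by
            simp only [commutatorElement_def]; group
          rw [e2]
          have := ihnorm.conj_mem _ (inv_mem ihx) x⁻¹
          rw [inv_inv] at this
          exact this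
      have hCL : ∀ x s : G, s ∈ Nsub A j → ⁅x, s⁆ ∈ Nsub A (j + 1) := by
        have hNj : Nsub A j = Subgroup.closure (⋃ i, Wset A (j + i)) :=
          (Subgroup.closure_iUnion _).symm
        intro x s hs
        rw [hNj] at hs
        induction hs using Subgroup.closure_induction with
        | mem s hsm =>
          obtain ⟨i, hwi⟩ := Set.mem_iUnion.mp hsm
          exact hbase x s i hwi
        | one =>
          rw [commutatorElement_one_right]
          exact one_mem _
        | mul s t hs ht ihs iht =>
          have e2 : ⁅x, s * t⁆ = ⁅x, s⁆ * (s * ⁅x, t⁆ * s⁻¹) := by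
            simp only [commutatorElement_def]; group
          rw [e2]
          exact mul_mem ihs (ihnorm.conj_mem _ iht s)
        | inv s hs ihs =>
          have e2 : ⁅x, s⁻¹⁆ = s⁻¹ * ⁅x, s⁆⁻¹ * s := by
            simp only [commutatorElement_def]; group
          rw [e2]
          have := ihnorm.conj_mem _ (inv_mem ihs) s⁻¹
          rw [inv_inv] at this
          exact this
      refine ⟨⟨fun s hs t => ?_⟩, hCL⟩
      have e2 : t * s * t⁻¹ = ⁅t, s⁆ * s := by
        simp only [commutatorElement_def]; group
      rw [e2]
      exact mul_mem (Nsub_succ_le A j (hCL t s hs)) hs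

/-- The inductive tracing statement along a subgroup `H` containing `g`. -/
def ClaimProp (T : G → X → X) (g : G) (c : ℝ) (H : Subgroup G) : Prop :=
  ∀ ε > (0 : ℝ), ∃ δ > (0 : ℝ), ∃ F : Finset G, ∀ ξ : G → X,
    (∀ f ∈ F, ∀ k : G, dist (T f (ξ k)) (ξ (f * k)) < δ) →
    ∃ Y : G → X, (∀ (h : G) (n : ℤ), dist (T (g ^ n) (Y h)) (ξ (g ^ n * h)) ≤ c / 2) ∧
      (∀ u ∈ H, ∀ h : G, T u (Y h) = Y (u * h)) ∧ ∀ h : G, dist (Y h) (ξ h) < ε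

theorem ClaimProp.mono {T : G → X → X} {g : G} {c : ℝ} {H H' : Subgroup G}
    (h : ClaimProp T g c H) (hle : H' ≤ H) : ClaimProp T g c H' := by
  intro ε hε
  obtain ⟨δ, hδ, F, hF⟩ := h ε hε
  refine ⟨δ, hδ, F, fun ξ hξ => ?_⟩
  obtain ⟨Y, p1, p2, p3⟩ := hF ξ hξ
  exact ⟨Y, p1, fun u hu => p2 u (hle hu), p3⟩

/-- Base case: tracing along the cyclic subgroup generated by `g`. -/
theorem claim_base [CompactSpace X] {T : G → X → X} (hT : IsContAction T) {g : G} {c : ℝ}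
    (hexp : ZExpansiveWith T g c) (hpotp : ZPOTP T g) :
    ClaimProp T g c (Subgroup.closure ({g} : Set G)) := by
  intro ε hε
  have hc := hexp.1
  have hε'pos : 0 < min ε (c / 2) := lt_min hε (by linarith)
  obtain ⟨δ, hδ, hδtr⟩ := hpotp (min ε (c / 2)) hε'pos
  refine ⟨δ, hδ, {g}, fun ξ hξ => ?_⟩
  have hξg : ∀ kk : G, dist (T g (ξ kk)) (ξ (g * kk)) < δ :=
    fun kk => hξ g (Finset.mem_singleton_self g) kk
  have spec : ∀ h : G, ∃ y : X, ∀ n : ℤ, dist (T (g ^ n) y) (ξ (g ^ n * h)) < min ε (c / 2) := by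
    intro h
    refine hδtr (fun n => ξ (g ^ n * h)) ?_
    intro n
    show dist (T g (ξ (g ^ n * h))) (ξ (g ^ (n + 1) * h)) < δ
    have e : g ^ (n + 1) * h = g * (g ^ n * h) := by
      rw [add_comm, zpow_add, zpow_one, mul_assoc]
    rw [e]
    exact hξg (g ^ n * h)
  choose Y hY using spec
  have hε'c : min ε (c / 2) ≤ c / 2 := min_le_right _ _
  have P1 : ∀ (h : G) (n : ℤ), dist (T (g ^ n) (Y h)) (ξ (g ^ n * h)) ≤ c / 2 :=
    fun h n => (hY h n).le.trans hε'c
  refine ⟨Y, P1, ?_, fun h => ?_⟩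
  · intro u hu h
    obtain ⟨n, rfl⟩ := Subgroup.mem_closure_singleton.mp hu
    refine unique_of_zexp hexp fun m => ?_
    have e1 : T (g ^ m) (T (g ^ n) (Y h)) = T (g ^ (m + n)) (Y h) := by
      rw [zpow_add, hT.2.2]
    have e2 : g ^ (m + n) * h = g ^ m * (g ^ n * h) := by rw [zpow_add, mul_assoc]
    calc dist (T (g ^ m) (T (g ^ n) (Y h))) (T (g ^ m) (Y (g ^ n * h)))
        ≤ dist (T (g ^ m) (T (g ^ n) (Y h))) (ξ (g ^ m * (g ^ n * h))) +
            dist (ξ (g ^ m * (g ^ n * h))) (T (g ^ m) (Y (g ^ n * h))) := dist_triangle _ _ _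
      _ ≤ c / 2 + c / 2 := add_le_add (by rw [e1, ← e2]; exact P1 h (m + n))
          (by rw [dist_comm]; exact P1 (g ^ n * h) m)
      _ = c := by ring
  · have h0 := hY h 0
    rw [zpow_zero, hT.2.1, one_mul] at h0
    exact lt_of_lt_of_le h0 (min_le_left _ _)

/-- Inductive step: extend tracing from `H'` to `closure B ⊔ H'`, when conjugates of
powers of `g` by elements of `B` fall into `H'`. -/
theorem claim_step [CompactSpace X] {T : G → X → X} (hT : IsContAction T) {g : G} {c : ℝ}
    (hexp : ZExpansiveWith T g c) {H' : Subgroup G} (B : Finset G)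
    (hB : ∀ b ∈ B, ∀ n : ℤ, b⁻¹ * g ^ n * b ∈ H')
    (ih : ClaimProp T g c H') : ClaimProp T g c (Subgroup.closure (B : Set G) ⊔ H') := by
  classical
  intro ε hε
  have hc := hexp.1
  obtain ⟨ρ, hρ, hB4⟩ := finset_unifcont hT.1 B (show (0 : ℝ) < c / 4 by linarith)
  have hε'pos : 0 < min ε ρ := lt_min hε hρ
  obtain ⟨δ', hδ', F', hF'⟩ := ih (min ε ρ) hε'pos
  refine ⟨min δ' (c / 4), lt_min hδ' (by linarith), F' ∪ B, fun ξ hξ => ?_⟩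
  have hξF' : ∀ f ∈ F', ∀ k : G, dist (T f (ξ k)) (ξ (f * k)) < δ' := fun f hf k =>
    lt_of_lt_of_le (hξ f (Finset.mem_union_left _ hf) k) (min_le_left _ _)
  have hξB : ∀ b ∈ B, ∀ k : G, dist (T b (ξ k)) (ξ (b * k)) < c / 4 := fun b hb k =>
    lt_of_lt_of_le (hξ b (Finset.mem_union_right _ hb) k) (min_le_right _ _)
  obtain ⟨Y, P1, P2, P3⟩ := hF' ξ hξF'
  have hTb : ∀ b ∈ B, ∀ h : G, T b (Y h) = Y (b * h) := by
    intro b hb h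
    refine unique_of_zexp hexp fun m => ?_
    have hu := hB b hb m
    have e1 : T (g ^ m) (T b (Y h)) = T b (Y ((b⁻¹ * g ^ m * b) * h)) := by
      rw [← hT.2.2]
      have e2 : g ^ m * b = b * (b⁻¹ * g ^ m * b) := by group
      rw [e2, hT.2.2, P2 _ hu h]
    have harg : b * ((b⁻¹ * g ^ m * b) * h) = g ^ m * (b * h) := by group
    have d1 : dist (T (g ^ m) (T b (Y h))) (ξ (g ^ m * (b * h))) < c / 2 := by
      rw [e1, ← harg]
      calc dist (T b (Y ((b⁻¹ * g ^ m * b) * h))) (ξ (b * ((b⁻¹ * g ^ m * b) * h)))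
          ≤ dist (T b (Y ((b⁻¹ * g ^ m * b) * h))) (T b (ξ ((b⁻¹ * g ^ m * b) * h))) +
              dist (T b (ξ ((b⁻¹ * g ^ m * b) * h))) (ξ (b * ((b⁻¹ * g ^ m * b) * h))) :=
            dist_triangle _ _ _
        _ < c / 4 + c / 4 := add_lt_add
            (hB4 b hb _ _ (lt_of_lt_of_le (P3 _) (min_le_right _ _))) (hξB b hb _)
        _ = c / 2 := by ring
    calc dist (T (g ^ m) (T b (Y h))) (T (g ^ m) (Y (b * h)))
        ≤ dist (T (g ^ m) (T b (Y h))) (ξ (g ^ m * (b * h))) +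
            dist (ξ (g ^ m * (b * h))) (T (g ^ m) (Y (b * h))) := dist_triangle _ _ _
      _ ≤ c / 2 + c / 2 := add_le_add d1.le (by rw [dist_comm]; exact P1 (b * h) m)
      _ = c := by ring
  set S : Subgroup G :=
    { carrier := {u : G | ∀ h : G, T u (Y h) = Y (u * h)}
      one_mem' := fun h => by rw [hT.2.1, one_mul]
      mul_mem' := fun {a b} ha hb h => by rw [hT.2.2, hb, ha, mul_assoc]
      inv_mem' := fun {a} ha h => by
        have e1 := ha (a⁻¹ * h)
        have e2 : a * (a⁻¹ * h) = h := by group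
        rw [e2] at e1
        calc T a⁻¹ (Y h) = T a⁻¹ (T a (Y (a⁻¹ * h))) := by rw [e1]
          _ = Y (a⁻¹ * h) := by rw [← hT.2.2, inv_mul_cancel, hT.2.1] } with hS
  have hle : Subgroup.closure (B : Set G) ⊔ H' ≤ S :=
    sup_le ((Subgroup.closure_le S).mpr fun b hb => hTb b hb) (fun u hu => P2 u hu)
  refine ⟨Y, P1, fun u hu h => ?_, fun h => lt_of_lt_of_le (P3 h) (min_le_left _ _)⟩
  exact hle hu h

/-- Descending induction along the chain `⟨g⟩ ⊔ Nsub A (k - d)`. -/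
theorem claim_chain [CompactSpace X] {A : Finset G}
    (hAgen : Subgroup.closure (A : Set G) = ⊤) {T : G → X → X} (hT : IsContAction T)
    {g : G} {c : ℝ} (hexp : ZExpansiveWith T g c) (hpotp : ZPOTP T g) {k : ℕ}
    (hk : Subgroup.lowerCentralSeries (⊤ : Subgroup G) k = ⊥) :
    ∀ d : ℕ, ClaimProp T g c (Subgroup.closure ({g} : Set G) ⊔ Nsub A (k - d)) := by
  intro d
  induction d with
  | zero =>
    rw [Nat.sub_zero, Nsub_bot hk, sup_bot_eq]
    exact claim_base hT hexp hpotp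
  | succ d ih =>
    by_cases hkd : k ≤ d
    · have e : k - (d + 1) = k - d := by omega
      rw [e]
      exact ih
    · have e : k - d = (k - (d + 1)) + 1 := by omega
      rw [e] at ih
      have hCL : ∀ x s : G, s ∈ Nsub A (k - (d + 1)) → ⁅x, s⁆ ∈ Nsub A (k - (d + 1) + 1) :=
        (normal_CL hAgen hk (d + 1)).2
      generalize hj : k - (d + 1) = j at ih hCL ⊢
      have hBfin := Wset_finite A j
      have hB : ∀ b ∈ hBfin.toFinset, ∀ n : ℤ,
          b⁻¹ * g ^ n * b ∈ Subgroup.closure ({g} : Set G) ⊔ Nsub A (j + 1) := by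
        intro b hb n
        rw [Set.Finite.mem_toFinset] at hb
        have hbN : b ∈ Nsub A j := mem_Nsub_of_mem_Wset (i := 0) (by rw [Nat.add_zero]; exact hb)
        have hcomm : ⁅g ^ (-n), b⁻¹⁆ ∈ Nsub A (j + 1) := hCL (g ^ (-n)) b⁻¹ (inv_mem hbN)
        have e2 : b⁻¹ * g ^ n * b = g ^ n * ⁅g ^ (-n), b⁻¹⁆ := by
          simp only [commutatorElement_def]; group
        rw [e2]
        refine mul_mem (Subgroup.mem_sup_left ?_) (Subgroup.mem_sup_right hcomm)
        exact Subgroup.zpow_mem _ (Subgroup.subset_closure (Set.mem_singleton g)) n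
      have step := claim_step hT hexp hBfin.toFinset hB ih
      refine step.mono ?_
      rw [Set.Finite.coe_toFinset]
      refine sup_le (le_sup_of_le_right le_sup_left) ?_
      exact (Nsub_le_sup A j).trans
        (sup_le le_sup_left (le_sup_of_le_right le_sup_right))

end PotpAux

/-- If `G` is a finitely generated nilpotent group and some `T_g` is expansive and has POTP,
then the `G`-action `T` has POTP. -/
theorem potp_of_nilpotent_of_element_expansive_potp
    {G X : Type*} [Group G] [Group.IsNilpotent G] [MetricSpace X] [CompactSpace X]
    (A : Finset G) (hAgen : Subgroup.closure (A : Set G) = ⊤)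
    (T : G → X → X) (hT : IsContAction T)
    (g : G) (c : ℝ) (hexp : ZExpansiveWith T g c) (hpotp : ZPOTP T g) :
    POTPWrt T (A : Set G) := by
  obtain ⟨k, hk⟩ := nilpotent_iff_lowerCentralSeries.mp ‹Group.IsNilpotent G›
  have hclaim := claim_chain hAgen hT hexp hpotp hk k
  rw [Nat.sub_self] at hclaim
  have htop : ClaimProp T g c ⊤ := by
    refine hclaim.mono ?_
    have hA0 : Subgroup.closure (A : Set G) ≤ Nsub A 0 :=
      (Subgroup.closure_le _).mpr fun a ha => mem_Nsub_of_mem_Wset (j := 0) (i := 0) ha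
    calc (⊤ : Subgroup G) = Subgroup.closure (A : Set G) := hAgen.symm
      _ ≤ Nsub A 0 := hA0
      _ ≤ Subgroup.closure ({g} : Set G) ⊔ Nsub A 0 := le_sup_right
  intro ε hε
  obtain ⟨δ₀, hδ₀, F, hF⟩ := htop ε hε
  obtain ⟨δ, hδ, htr⟩ := transfer_finset hAgen hT F hδ₀
  refine ⟨δ, hδ, fun x hx => ?_⟩
  obtain ⟨Y, P1, P2, P3⟩ := hF x (fun f hf k' => htr x hx f hf k')
  refine ⟨Y 1, fun h => ?_⟩
  have e := P2 h (Subgroup.mem_top h) 1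
  rw [mul_one] at e
  rw [e]
  exact P3 h
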